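/- Let p be a positive integer and q1 > q2 > q3 > q4 ≥ 1 be integers with gcd(p, q_i) = 1 for i = 1,2,3,4. If the four rational Beatty sequences S(p/q_i, β_i), i = 1,2,3,4, form a disjoint covering system of the integers, then q1 ≥ q4 + 4. -/

import Mathlib

def beattySet (α β : ℝ) : Set ℤ :=
  {m : ℤ | ∃ n : ℤ, m = ⌊α * n + β⌋}

lemma beatty_mem_iff (p q : ℕ) (hq : 0 < q) (β : ℝ) (m : ℤ) :
    m ∈ beattySet ((p:ℝ)/(q:ℝ)) β ↔
      ∃ j : ℕ, j < q ∧ (p:ℤ) ∣ ((q:ℤ)*m - ⌊(q:ℝ)*β⌋ + (j:ℤ)) := by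
  have hq0 : (0:ℝ) < q := by positivity
  have hqne : (q:ℝ) ≠ 0 := hq0.ne'
  have key : ∀ x : ℝ, (q:ℝ) * ((p:ℝ)/(q:ℝ) * x + β) = (p:ℝ)*x + (q:ℝ)*β := by
    intro x; field_simp
  constructor
  · rintro ⟨n, hn⟩
    have h1 : (m:ℝ) ≤ (p:ℝ)/(q:ℝ) * n + β := hn ▸ Int.floor_le _
    have h2 : (p:ℝ)/(q:ℝ) * n + β < (m:ℝ) + 1 := hn ▸ Int.lt_floor_add_one _
    have h1' : (q:ℝ)*(m:ℝ) ≤ (p:ℝ)*(n:ℝ) + (q:ℝ)*β := by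
      have := mul_le_mul_of_nonneg_left h1 hq0.le
      rwa [key] at this
    have h2' : (p:ℝ)*(n:ℝ) + (q:ℝ)*β < (q:ℝ)*(m:ℝ) + (q:ℝ) := by
      have := mul_lt_mul_of_pos_left h2 hq0
      rw [key] at this; nlinarith
    set t : ℤ := (q:ℤ)*m - (p:ℤ)*n with ht
    have htr : (t:ℝ) = (q:ℝ)*(m:ℝ) - (p:ℝ)*(n:ℝ) := by rw [ht]; push_cast; ring
    have ht1 : t ≤ ⌊(q:ℝ)*β⌋ := by
      apply Int.le_floor.mpr
      rw [htr]; linarith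
    have ht2 : ⌊(q:ℝ)*β⌋ < t + (q:ℤ) := by
      apply Int.floor_lt.mpr
      push_cast
      rw [htr]; linarith [Int.floor_le ((q:ℝ)*β)]
    refine ⟨(⌊(q:ℝ)*β⌋ - t).toNat, by omega, n, ?_⟩
    have hj : ((⌊(q:ℝ)*β⌋ - t).toNat : ℤ) = ⌊(q:ℝ)*β⌋ - t := Int.toNat_of_nonneg (by omega)
    rw [hj, ht]; ring
  · rintro ⟨j, hj, n, hn⟩
    refine ⟨n, ?_⟩
    symm
    rw [Int.floor_eq_iff]
    have hc : ((⌊(q:ℝ)*β⌋ : ℤ) : ℝ) ≤ (q:ℝ)*β := Int.floor_le _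
    have hc2 : (q:ℝ)*β < ((⌊(q:ℝ)*β⌋ : ℤ) : ℝ) + 1 := Int.lt_floor_add_one _
    have hpn : (p:ℝ)*(n:ℝ) = (q:ℝ)*(m:ℝ) - ((⌊(q:ℝ)*β⌋ : ℤ) : ℝ) + (j:ℝ) := by
      exact_mod_cast congrArg (fun z : ℤ => (z : ℝ)) hn.symm
    have hjq : (j:ℝ) + 1 ≤ (q:ℝ) := by exact_mod_cast hj
    constructor
    · have hle : (q:ℝ)*(m:ℝ) ≤ (p:ℝ)*(n:ℝ) + (q:ℝ)*β := by
        have hj0 : (0:ℝ) ≤ (j:ℝ) := by positivity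
        linarith
      rw [← key] at hle
      exact (mul_le_mul_iff_right₀ hq0).mp hle
    · have hlt : (p:ℝ)*(n:ℝ) + (q:ℝ)*β < (q:ℝ)*((m:ℝ)+1) := by nlinarith
      rw [← key] at hlt
      exact (mul_lt_mul_iff_right₀ hq0).mp hlt

lemma count_lemma (p q : ℕ) (hp : 0 < p) (hq : 0 < q) (hg : Nat.gcd p q = 1) (β : ℝ) :
    ∃ T : Finset (ZMod p),
      (∀ m : ℤ, m ∈ beattySet ((p:ℝ)/(q:ℝ)) β ↔ (m : ZMod p) ∈ T) ∧
      min q p ≤ T.card ∧ T.card ≤ q := by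
  haveI : NeZero p := ⟨hp.ne'⟩
  set c : ℤ := ⌊(q:ℝ)*β⌋ with hc
  have hu : IsUnit (q : ZMod p) := by
    rw [ZMod.isUnit_iff_coprime]
    exact Nat.coprime_comm.mp hg
  set f : ℕ → ZMod p := fun j => ((q : ZMod p))⁻¹ * ((c : ZMod p) - (j:ℕ)) with hf
  refine ⟨(Finset.range q).image f, ?_, ?_, ?_⟩
  · intro m
    rw [beatty_mem_iff p q hq β m]
    simp only [Finset.mem_image, Finset.mem_range]
    constructor
    · rintro ⟨j, hj, hdvd⟩
      refine ⟨j, hj, ?_⟩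
      have h0 : (((q:ℤ)*m - c + (j:ℤ) : ℤ) : ZMod p) = 0 :=
        (ZMod.intCast_zmod_eq_zero_iff_dvd _ _).mpr hdvd
      push_cast at h0
      have : (q : ZMod p) * (m : ZMod p) = (c : ZMod p) - (j : ZMod p) := by
        linear_combination h0
      rw [hf]
      simp only
      rw [← this, ← mul_assoc, ZMod.inv_mul_of_unit _ hu, one_mul]
    · rintro ⟨j, hj, hfj⟩
      refine ⟨j, hj, ?_⟩
      rw [← ZMod.intCast_zmod_eq_zero_iff_dvd]
      have : (q : ZMod p) * (m : ZMod p) = (c : ZMod p) - (j : ZMod p) := by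
        rw [← hfj, hf]
        simp only
        rw [← mul_assoc, ZMod.mul_inv_of_unit _ hu, one_mul]
      push_cast
      linear_combination this
  · have hsub : (Finset.range (min q p)).image f ⊆ (Finset.range q).image f :=
      Finset.image_subset_image (Finset.range_subset_range.mpr (min_le_left _ _))
    have hinj : Set.InjOn f (Finset.range (min q p)) := by
      intro j1 h1 j2 h2 he
      simp only [Finset.coe_range, Set.mem_Iio] at h1 h2
      rw [hf] at he
      simp only at he
      have hq1 : (q : ZMod p) * (((q:ZMod p))⁻¹ * ((c : ZMod p) - (j1:ℕ)))
          = (q : ZMod p) * (((q:ZMod p))⁻¹ * ((c : ZMod p) - (j2:ℕ))) := by rw [he]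
      rw [← mul_assoc, ← mul_assoc, ZMod.mul_inv_of_unit _ hu, one_mul, one_mul] at hq1
      have : ((j1:ℕ) : ZMod p) = ((j2:ℕ) : ZMod p) := by linear_combination -hq1
      have hv := congrArg ZMod.val this
      rwa [ZMod.val_cast_of_lt (by omega), ZMod.val_cast_of_lt (by omega)] at hv
    calc min q p = ((Finset.range (min q p)).image f).card := by
          rw [Finset.card_image_of_injOn hinj, Finset.card_range]
      _ ≤ _ := Finset.card_le_card hsub
  · exact Finset.card_image_le.trans (by simp)

theorem fraenkel_four_q1_ge_q4_add_four (p q1 q2 q3 q4 : ℕ) (hp : 0 < p)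
    (h12 : q2 < q1) (h23 : q3 < q2) (h34 : q4 < q3) (h4 : 1 ≤ q4)
    (hg1 : Nat.gcd p q1 = 1) (hg2 : Nat.gcd p q2 = 1)
    (hg3 : Nat.gcd p q3 = 1) (hg4 : Nat.gcd p q4 = 1)
    (β : Fin 4 → ℝ)
    (hcov : ∀ m : ℤ, ∃! i : Fin 4,
      m ∈ beattySet ((p : ℝ) / ((![q1, q2, q3, q4] i : ℕ) : ℝ)) (β i)) :
    q4 + 4 ≤ q1 := by
  haveI : NeZero p := ⟨hp.ne'⟩
  classical
  set Q : Fin 4 → ℕ := ![q1, q2, q3, q4] with hQ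
  have hQpos : ∀ i, 0 < Q i := by
    intro i; fin_cases i <;> simp [hQ] <;> omega
  have hgQ : ∀ i, Nat.gcd p (Q i) = 1 := by
    intro i; fin_cases i <;> simpa [hQ]
  choose T hT hT1 hT2 using fun i => count_lemma p (Q i) hp (hQpos i) (hgQ i) (β i)
  -- covering on ZMod p
  have hcov' : ∀ a : ZMod p, ∃! i : Fin 4, a ∈ T i := by
    intro a
    obtain ⟨i, hi, hiu⟩ := hcov (a.val : ℤ)
    have hcast : (((a.val : ℤ)) : ZMod p) = a := by
      push_cast
      exact ZMod.natCast_rightInverse a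
    refine ⟨i, ?_, fun j hj => hiu j ((hT j (a.val : ℤ)).mpr (by rw [hcast]; exact hj))⟩
    have := (hT i (a.val : ℤ)).mp hi
    rwa [hcast] at this
  have hpart : ∀ a : ZMod p, (Finset.univ.filter fun i => a ∈ T i).card = 1 := by
    intro a
    obtain ⟨i, hi, hiu⟩ := hcov' a
    rw [Finset.card_eq_one]
    refine ⟨i, ?_⟩
    ext j
    simp only [Finset.mem_filter, Finset.mem_univ, true_and, Finset.mem_singleton]
    exact ⟨fun hj => hiu j hj, fun h => h ▸ hi⟩
  have hsum : ∑ i : Fin 4, (T i).card = p := by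
    have h1 : ∀ i, (T i).card = ∑ a : ZMod p, if a ∈ T i then 1 else 0 := by
      intro i
      rw [show T i = Finset.univ.filter (fun a => a ∈ T i) by ext a; simp]
      rw [Finset.card_filter]
      simp
    calc ∑ i : Fin 4, (T i).card
        = ∑ i : Fin 4, ∑ a : ZMod p, if a ∈ T i then 1 else 0 :=
          Finset.sum_congr rfl fun i _ => h1 i
      _ = ∑ a : ZMod p, ∑ i : Fin 4, if a ∈ T i then 1 else 0 := Finset.sum_comm
      _ = ∑ a : ZMod p, 1 := Finset.sum_congr rfl (fun a _ => by
          rw [← Finset.card_filter]; exact hpart a)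
      _ = Fintype.card (ZMod p) := by simp
      _ = p := ZMod.card p
  have e1 := hT1 0; have e2 := hT1 1; have e3 := hT1 2; have e4 := hT1 3
  have f1 := hT2 0; have f2 := hT2 1; have f3 := hT2 2; have f4 := hT2 3
  have hs : (T 0).card + (T 1).card + (T 2).card + (T 3).card = p := by
    rw [Fin.sum_univ_four] at hsum; exact hsum
  have hQ0 : Q 0 = q1 := rfl
  have hQ1 : Q 1 = q2 := rfl
  have hQ2 : Q 2 = q3 := rfl
  have hQ3 : Q 3 = q4 := rfl
  rw [hQ0] at e1 f1; rw [hQ1] at e2 f2; rw [hQ2] at e3 f3; rw [hQ3] at e4 f4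
  -- now derive q1+q2+q3+q4 = p
  have hsumq : q1 + q2 + q3 + q4 = p := by omega
  by_contra hcon
  push_neg at hcon
  have hq3e : q3 = q4 + 1 := by omega
  have hpe : p = 4 * q4 + 6 := by omega
  rcases Nat.even_or_odd q4 with he | ho
  · obtain ⟨k, hk⟩ := he
    have : 2 ∣ Nat.gcd p q4 := Nat.dvd_gcd ⟨2*q4+3, by omega⟩ ⟨k, by omega⟩
    rw [hg4] at this
    omega
  · obtain ⟨k, hk⟩ := ho
    have : 2 ∣ Nat.gcd p q3 := Nat.dvd_gcd ⟨2*q4+3, by omega⟩ ⟨k+1, by omega⟩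
    rw [hg3] at this
    omega
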